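/- arXiv:2308.05373 — 5 statements merged into one kernel-verified Lean document; each statement's English description precedes it below -/
import Mathlib

section
/- There exists a constant γ > 0 such that for every n ≥ 4 and p ∈ [0,1], if X ~ Binomial(n,p) then Var[X·1(X ≥ 4)] ≤ γ·E[X·1(X ≥ 4)]. -/
open Finset Real

lemma binom_moment (r : ℕ) : ∀ (n : ℕ) (p : ℝ),
    ∑ k ∈ Finset.range (n + 1),
      (n.choose k : ℝ) * p ^ k * (1 - p) ^ (n - k) * (k.descFactorial r : ℝ)
    = (n.descFactorial r : ℝ) * p ^ r := by
  induction r with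
  | zero =>
    intro n p
    simp only [Nat.descFactorial_zero, Nat.cast_one, mul_one, pow_zero]
    have h := add_pow p (1 - p) n
    simp only [add_sub_cancel, one_pow] at h
    exact Eq.trans (Finset.sum_congr rfl (fun k _ => by ring)) h.symm
  | succ r ih =>
    intro n p
    cases n with
    | zero => simp
    | succ m =>
      rw [Finset.sum_range_succ']
      have key : ∀ j ∈ Finset.range (m + 1),
          ((m+1).choose (j+1) : ℝ) * p ^ (j+1) * (1 - p) ^ (m + 1 - (j+1)) *
            ((j+1).descFactorial (r+1) : ℝ)
          = ((m:ℝ)+1) * p * ((m.choose j : ℝ) * p ^ j * (1 - p) ^ (m - j) *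
              (j.descFactorial r : ℝ)) := by
        intro j hj
        have h2 : ((m+1 : ℕ) : ℝ) * (m.choose j : ℝ) = ((m+1).choose (j+1) : ℝ) * ((j+1 : ℕ) : ℝ) := by
          exact_mod_cast congrArg (Nat.cast (R := ℝ)) (Nat.add_one_mul_choose_eq m j)
        have h1 : ((j+1).descFactorial (r+1) : ℝ) = ((j+1:ℕ) : ℝ) * (j.descFactorial r : ℝ) := by
          exact_mod_cast congrArg (Nat.cast (R := ℝ)) (Nat.succ_descFactorial_succ j r)
        have h3 : m + 1 - (j + 1) = m - j := by omega
        rw [h1, h3]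
        push_cast at h2 ⊢
        linear_combination (-(p ^ (j+1)) * (1-p) ^ (m-j) * (j.descFactorial r : ℝ)) * h2
      rw [Finset.sum_congr rfl key, ← Finset.mul_sum, ih m p]
      have h4 : ((m+1).descFactorial (r+1) : ℝ) = ((m+1:ℕ) : ℝ) * (m.descFactorial r : ℝ) := by
        exact_mod_cast congrArg (Nat.cast (R := ℝ)) (Nat.succ_descFactorial_succ m r)
      simp only [Nat.zero_descFactorial_succ, Nat.cast_zero, mul_zero, add_zero]
      rw [h4]
      push_cast
      ring


lemma desc4_eq (m : ℕ) : (4 + m).descFactorial 4 = (m+1)*((m+2)*((m+3)*(m+4))) := by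
  have e3 : 4 + m - 3 = m + 1 := by omega
  have e2 : 4 + m - 2 = m + 2 := by omega
  have e1 : 4 + m - 1 = m + 3 := by omega
  have e0 : 4 + m - 0 = m + 4 := by omega
  simp only [Nat.descFactorial_succ, Nat.descFactorial_zero, e3, e2, e1, e0, mul_one]

lemma sq_le_desc4 (k : ℕ) (hk : 4 ≤ k) : k * k ≤ k.descFactorial 4 := by
  obtain ⟨m, rfl⟩ := Nat.exists_eq_add_of_le hk
  rw [desc4_eq]
  nlinarith [sq_nonneg m, m.zero_le]

lemma cast_sq_eq (k : ℕ) : ((k:ℝ))^2 = (k.descFactorial 2 : ℝ) + k := by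
  cases k with
  | zero => simp
  | succ m =>
    have h : (m+1).descFactorial 2 = (m+1) * m.descFactorial 1 := Nat.succ_descFactorial_succ m 1
    rw [h, Nat.descFactorial_one]
    push_cast
    ring

lemma pow4_le_choose (n : ℕ) (hn : 4 ≤ n) : n^4 ≤ 6144 * n.choose 4 := by
  have e : n.descFactorial 4 = 24 * n.choose 4 := by
    rw [Nat.descFactorial_eq_factorial_mul_choose]
    norm_num [Nat.factorial]
  obtain ⟨m, rfl⟩ := Nat.exists_eq_add_of_le hn
  have h := desc4_eq m
  nlinarith [e, h, sq_nonneg m, m.zero_le]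

set_option maxHeartbeats 2000000 in
/-- There is a constant `γ > 0` such that for all `n ≥ 4` and `p ∈ [0,1]`,
`Var[X·1(X ≥ 4)] ≤ γ·E[X·1(X ≥ 4)]` for `X ~ Binomial(n,p)`. -/
theorem stmt_1 :
    ∃ γ : ℝ, 0 < γ ∧ ∀ (n : ℕ), 4 ≤ n → ∀ p : ℝ, 0 ≤ p → p ≤ 1 →
      (∑ k ∈ Finset.range (n + 1),
          (n.choose k : ℝ) * p ^ k * (1 - p) ^ (n - k) * (if 4 ≤ k then (k : ℝ) else 0) ^ 2)
        - (∑ k ∈ Finset.range (n + 1),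
            (n.choose k : ℝ) * p ^ k * (1 - p) ^ (n - k) * (if 4 ≤ k then (k : ℝ) else 0)) ^ 2
      ≤ γ * ∑ k ∈ Finset.range (n + 1),
          (n.choose k : ℝ) * p ^ k * (1 - p) ^ (n - k) * (if 4 ≤ k then (k : ℝ) else 0) := by
  refine ⟨6 * 4^28, by norm_num, ?_⟩
  intro n hn p hp0 hp1
  have hp1' : (0:ℝ) ≤ 1 - p := by linarith
  set q : ℕ → ℝ := fun k => (n.choose k : ℝ) * p ^ k * (1 - p) ^ (n - k) with hq
  have hq0 : ∀ k, 0 ≤ q k := fun k =>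
    mul_nonneg (mul_nonneg (Nat.cast_nonneg _) (pow_nonneg hp0 k)) (pow_nonneg hp1' _)
  set w : ℕ → ℝ := fun k => if 4 ≤ k then (k : ℝ) else 0 with hw
  have hw0 : ∀ k, 0 ≤ w k := by
    intro k; simp only [hw]; split <;> positivity
  have hwk : ∀ k, w k ≤ k := by
    intro k; simp only [hw]; split
    · exact le_refl _
    · positivity
  set B := ∑ k ∈ Finset.range (n + 1), q k * w k with hBdef
  set A := ∑ k ∈ Finset.range (n + 1), q k * w k ^ 2 with hAdef
  show A - B ^ 2 ≤ 6 * 4 ^ 28 * B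
  -- basic facts
  have hB0 : 0 ≤ B := Finset.sum_nonneg fun k _ => mul_nonneg (hq0 k) (hw0 k)
  have hS0 : ∑ k ∈ Finset.range (n + 1), q k = 1 := by
    have h := binom_moment 0 n p
    simpa using h
  have hS1 : ∑ k ∈ Finset.range (n + 1), q k * (k:ℝ) = (n:ℝ) * p := by
    have h := binom_moment 1 n p
    simpa [Nat.descFactorial_one] using h
  have hS2 : ∑ k ∈ Finset.range (n + 1), q k * (k:ℝ)^2
      = (n.descFactorial 2 : ℝ) * p^2 + (n:ℝ) * p := by
    have h2 := binom_moment 2 n p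
    calc ∑ k ∈ Finset.range (n + 1), q k * (k:ℝ)^2
        = ∑ k ∈ Finset.range (n + 1), (q k * (k.descFactorial 2 : ℝ) + q k * (k:ℝ)) := by
          refine Finset.sum_congr rfl fun k _ => ?_
          rw [cast_sq_eq]; ring
      _ = (n.descFactorial 2 : ℝ) * p^2 + (n:ℝ) * p := by
          rw [Finset.sum_add_distrib]
          rw [show ∑ k ∈ Finset.range (n+1), q k * (k.descFactorial 2:ℝ)
              = (n.descFactorial 2 : ℝ) * p^2 from by
            rw [← h2]]
          rw [hS1]
  have hS4 : ∑ k ∈ Finset.range (n + 1), q k * (k.descFactorial 4 : ℝ)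
      = (n.descFactorial 4 : ℝ) * p^4 := by
    rw [← binom_moment 4 n p]
  -- A ≤ n^4 p^4
  have hA4 : A ≤ (n:ℝ)^4 * p^4 := by
    have h1 : A ≤ ∑ k ∈ Finset.range (n + 1), q k * (k.descFactorial 4 : ℝ) := by
      refine Finset.sum_le_sum fun k _ => ?_
      refine mul_le_mul_of_nonneg_left ?_ (hq0 k)
      simp only [hw]
      split
      · rename_i h4
        have := sq_le_desc4 k h4
        have : ((k*k : ℕ) : ℝ) ≤ ((k.descFactorial 4 : ℕ) : ℝ) := by exact_mod_cast this
        push_cast at this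
        nlinarith [this]
      · rw [zero_pow (by norm_num)]; positivity
    rw [hS4] at h1
    refine h1.trans ?_
    have : (n.descFactorial 4 : ℝ) ≤ (n:ℝ)^4 := by
      exact_mod_cast Nat.cast_le.mpr (Nat.descFactorial_le_pow n 4)
    nlinarith [pow_nonneg hp0 4]
  -- A ≤ second moment
  have hA2 : A ≤ (n:ℝ)^2 * p^2 + (n:ℝ) * p := by
    have h1 : A ≤ ∑ k ∈ Finset.range (n + 1), q k * (k:ℝ)^2 := by
      refine Finset.sum_le_sum fun k _ => ?_
      refine mul_le_mul_of_nonneg_left ?_ (hq0 k)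
      simp only [hw]; split
      · exact le_refl _
      · simpa using sq_nonneg ((k:ℝ))
    rw [hS2] at h1
    have : (n.descFactorial 2 : ℝ) ≤ (n:ℝ)^2 := by
      exact_mod_cast Nat.cast_le.mpr (Nat.descFactorial_le_pow n 2)
    nlinarith [pow_nonneg hp0 2]
  -- B bounds
  have hB_le : B ≤ (n:ℝ) * p := by
    rw [← hS1]
    exact Finset.sum_le_sum fun k _ => mul_le_mul_of_nonneg_left (hwk k) (hq0 k)
  have hB_ge : (n:ℝ) * p - 3 ≤ B := by
    have h1 : ∑ k ∈ Finset.range (n+1), (q k * (k:ℝ) - q k * w k)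
        ≤ ∑ k ∈ Finset.range (n+1), 3 * q k := by
      refine Finset.sum_le_sum fun k _ => ?_
      have : (k:ℝ) - w k ≤ 3 := by
        simp only [hw]; split
        · simp
        · rename_i h4
          have : k ≤ 3 := by omega
          have : (k:ℝ) ≤ 3 := by exact_mod_cast this
          linarith
      nlinarith [hq0 k, this]
    rw [Finset.sum_sub_distrib, hS1, ← Finset.mul_sum, hS0] at h1
    simp only [mul_one] at h1
    linarith
  clear_value A B
  by_cases hc : 6 ≤ (n:ℝ) * p
  · -- large mean case
    clear hS0 hS1 hS2 hS4 hA4 hq0 hw0 hwk hq hw hAdef hBdef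
    clear_value q w
    clear q w
    have hB3 : 3 ≤ B := by linarith
    have hBsq : ((n:ℝ)*p - 3)^2 ≤ B^2 := by nlinarith
    have e1 : A - B^2 ≤ 7*((n:ℝ)*p) - 9 := by nlinarith [hA2, hBsq]
    have e2 : 7*((n:ℝ)*p) - 9 ≤ 14*B := by linarith
    have e3 : (0:ℝ) ≤ (6*4^28 - 14) * B :=
      mul_nonneg (by norm_num) hB0
    nlinarith [e1, e2, e3]
  · push_neg at hc
    by_cases hp : p ≤ 1/2
    · -- small p case: B ≥ n^4 p^4 / (6*4^28)
      have h4mem : 4 ∈ Finset.range (n+1) := by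
        simp; omega
      have hB4 : q 4 * w 4 ≤ B := by
        rw [hBdef]
        exact Finset.single_le_sum (f := fun k => q k * w k)
          (fun k _ => mul_nonneg (hq0 k) (hw0 k)) h4mem
      have hw4 : w 4 = 4 := by simp [hw]
      -- (1-p)^(n-4) ≥ 1/4^24
      set m := n / 24 + 1 with hm
      have hexp : n - 4 ≤ 24 * m := by omega
      have h2 : (1-p)^(24*m) ≤ (1-p)^(n-4) :=
        pow_le_pow_of_le_one hp1' (by linarith) hexp
      have h3 : (1-p)^(24*m) = ((1-p)^m)^24 := by
        rw [mul_comm, pow_mul]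
      have hmp : (m:ℝ) * p ≤ 3/4 := by
        have hcast : ((n/24 : ℕ) : ℝ) ≤ (n:ℝ)/24 := Nat.cast_div_le
        have h5 : ((n/24 : ℕ) : ℝ) * p ≤ (n:ℝ)/24 * p :=
          mul_le_mul_of_nonneg_right hcast hp0
        have h6 : (n:ℝ)/24 * p ≤ 1/4 := by
          have e : (n:ℝ)/24 * p = (n:ℝ)*p/24 := by ring
          rw [e]; linarith
        have e7 : (m:ℝ) = ((n/24 : ℕ) : ℝ) + 1 := by push_cast [hm]; ring
        rw [e7]
        have e8 : (((n/24 : ℕ) : ℝ) + 1) * p = ((n/24 : ℕ) : ℝ) * p + p := by ring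
        rw [e8]
        linarith
      have hbern : 1 - (m:ℝ)*p ≤ (1-p)^m := by
        have hb := one_add_mul_le_pow (a := -p) (by linarith : (-2:ℝ) ≤ -p) m
        have eb : (1:ℝ) + (m:ℝ) * (-p) = 1 - (m:ℝ)*p := by ring
        have eb2 : ((1:ℝ) + -p) = 1 - p := by ring
        rw [eb, eb2] at hb
        exact hb
      have hq4 : (1/4:ℝ) ≤ (1-p)^m := by linarith
      have hq24 : ((1/4:ℝ))^24 ≤ ((1-p)^m)^24 :=
        pow_le_pow_left₀ (by norm_num) hq4 24
      have hpow : (1:ℝ)/4^24 ≤ (1-p)^(n-4) := by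
        calc (1:ℝ)/4^24 = (1/4:ℝ)^24 := by norm_num
          _ ≤ ((1-p)^m)^24 := hq24
          _ = (1-p)^(24*m) := h3.symm
          _ ≤ (1-p)^(n-4) := h2
      -- choose bound
      have hch : (n:ℝ)^4 / 1536 ≤ 4 * (n.choose 4 : ℝ) := by
        have := pow4_le_choose n hn
        have : ((n:ℝ))^4 ≤ 6144 * (n.choose 4 : ℝ) := by exact_mod_cast this
        linarith
      have hBlow : (n:ℝ)^4 * p^4 / (6*4^28) ≤ B := by
        have key : (n:ℝ)^4 * p^4 / (6*4^28)
            ≤ (4 * (n.choose 4 : ℝ)) * p^4 * ((1:ℝ)/4^24) := by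
          have e : (n:ℝ)^4 * p^4 / (6*4^28) = ((n:ℝ)^4/1536) * p^4 * ((1:ℝ)/4^24) := by
            ring
          rw [e]
          have hp4 : (0:ℝ) ≤ p^4 := by positivity
          have h14 : (0:ℝ) ≤ (1:ℝ)/4^24 := by norm_num
          exact mul_le_mul_of_nonneg_right
            (mul_le_mul_of_nonneg_right hch hp4) h14
        have key2 : (4 * (n.choose 4 : ℝ)) * p^4 * ((1:ℝ)/4^24)
            ≤ (4 * (n.choose 4 : ℝ)) * p^4 * (1-p)^(n-4) := by
          refine mul_le_mul_of_nonneg_left hpow ?_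
          positivity
        have e2 : (4 * (n.choose 4 : ℝ)) * p^4 * (1-p)^(n-4) = q 4 * w 4 := by
          rw [hw4, hq]; ring
        calc (n:ℝ)^4 * p^4 / (6*4^28) ≤ _ := key
          _ ≤ _ := key2
          _ = q 4 * w 4 := e2
          _ ≤ B := hB4
      have hfin : A ≤ 6 * 4^28 * B := by
        calc A ≤ (n:ℝ)^4 * p^4 := hA4
          _ = 6 * 4^28 * ((n:ℝ)^4 * p^4 / (6*4^28)) := by ring
          _ ≤ 6 * 4^28 * B := by
            refine mul_le_mul_of_nonneg_left hBlow (by norm_num)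
      linarith [sq_nonneg B, hfin]
    · -- p > 1/2, so n ≤ 11
      push_neg at hp
      have hn12 : (n:ℝ) < 12 := by nlinarith
      have hn11 : n ≤ 11 := by
        by_contra h
        push_neg at h
        have : (12:ℝ) ≤ (n:ℝ) := by exact_mod_cast h
        linarith
      have hnmem : n ∈ Finset.range (n+1) := Finset.self_mem_range_succ n
      have hBn : q n * w n ≤ B := by
        rw [hBdef]
        exact Finset.single_le_sum (f := fun k => q k * w k)
          (fun k _ => mul_nonneg (hq0 k) (hw0 k)) hnmem
      have hqn : q n = p ^ n := by
        simp [hq, Nat.choose_self, Nat.sub_self]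
      have hwn : w n = (n:ℝ) := by simp [hw, hn]
      have hpn : (1/2:ℝ)^11 ≤ p^n := by
        calc (1/2:ℝ)^11 ≤ (1/2:ℝ)^n :=
              pow_le_pow_of_le_one (by norm_num) (by norm_num) hn11
          _ ≤ p^n := pow_le_pow_left₀ (by norm_num) hp.le n
      have hn4 : (4:ℝ) ≤ (n:ℝ) := by exact_mod_cast hn
      have h1 : (4:ℝ)*(1/2:ℝ)^11 ≤ (n:ℝ)*p^n :=
        mul_le_mul hn4 hpn (by positivity) (by linarith)
      have hBlow : (1:ℝ)/512 ≤ B := by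
        have e : q n * w n = (n:ℝ) * p^n := by rw [hqn, hwn]; ring
        rw [e] at hBn
        have h2 : (4:ℝ)*(1/2:ℝ)^11 = 1/512 := by norm_num
        linarith
      have hA6 : A ≤ 1296 := by
        have e : (n:ℝ)^4*p^4 = ((n:ℝ)*p)^4 := by ring
        have h4 : ((n:ℝ)*p)^4 ≤ 6^4 :=
          pow_le_pow_left₀ (mul_nonneg (Nat.cast_nonneg n) hp0) hc.le 4
        rw [e] at hA4
        norm_num at h4
        linarith
      have h5 : (1296:ℝ) ≤ 6*4^28*(1/512) := by norm_num
      have h6 : (6:ℝ)*4^28*(1/512) ≤ 6*4^28*B :=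
        mul_le_mul_of_nonneg_left hBlow (by norm_num)
      linarith [sq_nonneg B, hA6, h5, h6]
end

section
/- There exists a constant C > 0 such that for every n ≥ 9, p ∈ [0,1], and a, b ≥ 2, if X ~ Binomial(n,p) and λ = np, then E[X·√(min{X,a}·min{X,b})·1(X ≥ 4)] ≥ C·min{λ·√(min(λ,a)·min(λ,b)), λ^4}. -/
open Finset Real

lemma eval_bp (n ν : ℕ) (p : ℝ) :
    (bernsteinPolynomial ℝ n ν).eval p = (n.choose ν : ℝ) * p ^ ν * (1 - p) ^ (n - ν) := by
  simp [bernsteinPolynomial]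

lemma w_sum (n : ℕ) (p : ℝ) :
    ∑ k ∈ Finset.range (n+1), (n.choose k : ℝ) * p ^ k * (1 - p) ^ (n - k) = 1 := by
  have h := congrArg (Polynomial.eval p) (bernsteinPolynomial.sum ℝ n)
  simpa [Polynomial.eval_finset_sum, eval_bp] using h

lemma w_var (n : ℕ) (p : ℝ) :
    ∑ k ∈ Finset.range (n+1), ((n:ℝ)*p - k)^2 * ((n.choose k : ℝ) * p ^ k * (1 - p) ^ (n - k))
      = (n:ℝ)*p*(1-p) := by
  have h := congrArg (Polynomial.eval p) (bernsteinPolynomial.variance ℝ n)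
  simpa [Polynomial.eval_finset_sum, eval_bp] using h

lemma choose4 (n : ℕ) (hn : 9 ≤ n) :
    (24:ℝ) * (n.choose 4 : ℝ) = (n:ℝ) * ((n:ℝ)-1) * ((n:ℝ)-2) * ((n:ℝ)-3) := by
  have h : 24 * n.choose 4 = (n-3) * ((n-2) * ((n-1) * n)) := by
    have hd := Nat.descFactorial_eq_factorial_mul_choose n 4
    simp [Nat.descFactorial, Nat.factorial] at hd
    omega
  have := congrArg (Nat.cast (R := ℝ)) h
  push_cast [Nat.cast_sub (by omega : 3 ≤ n), Nat.cast_sub (by omega : 2 ≤ n),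
    Nat.cast_sub (by omega : 1 ≤ n)] at this
  linarith

lemma exp_bound' (p : ℝ) (hp0 : 0 ≤ p) (hp9 : p ≤ 8/9) : Real.exp (-(9*p)) ≤ 1 - p := by
  have h1 : 1 + 9*p ≤ Real.exp (9*p) := by
    have := Real.add_one_le_exp (9*p); linarith
  have hpos : (0:ℝ) < 1 + 9*p := by linarith
  rw [Real.exp_neg]
  have h3 : (Real.exp (9*p))⁻¹ ≤ (1+9*p)⁻¹ := inv_anti₀ hpos h1
  have h4 : 1/(1+9*p) ≤ 1 - p := by
    rw [div_le_iff₀ hpos]; nlinarith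
  calc (Real.exp (9*p))⁻¹ ≤ (1+9*p)⁻¹ := h3
    _ = 1/(1+9*p) := (one_div _).symm
    _ ≤ 1 - p := h4

set_option maxHeartbeats 1600000 in
/-- There is `C > 0` such that for `X ~ Binomial(n,p)` with `n ≥ 9`, `p ∈ [0,1]`,
`a, b ≥ 2` and `λ = np`,
`E[X·√(min{X,a}·min{X,b})·1(X ≥ 4)] ≥ C·min{λ·√(min(λ,a)·min(λ,b)), λ^4}`. -/
theorem stmt_2 :
    ∃ C : ℝ, 0 < C ∧ ∀ (n : ℕ), 9 ≤ n → ∀ p : ℝ, 0 ≤ p → p ≤ 1 →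
      ∀ a b : ℝ, 2 ≤ a → 2 ≤ b →
      ∑ k ∈ Finset.range (n + 1),
          (n.choose k : ℝ) * p ^ k * (1 - p) ^ (n - k) *
            (if 4 ≤ k then (k : ℝ) * Real.sqrt (min (k : ℝ) a * min (k : ℝ) b) else 0)
        ≥ C * min (((n : ℝ) * p) * Real.sqrt (min ((n : ℝ) * p) a * min ((n : ℝ) * p) b))
              (((n : ℝ) * p) ^ 4) := by
  refine ⟨Real.exp (-72) / 100, by positivity, ?_⟩
  intro n hn p hp0 hp1 a b ha hb
  have hq0 : (0:ℝ) ≤ 1 - p := by linarith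
  have hn9 : (9:ℝ) ≤ (n:ℝ) := by exact_mod_cast hn
  set C : ℝ := Real.exp (-72) / 100 with hC
  have hCpos : 0 < C := by positivity
  set L : ℝ := (n:ℝ) * p with hL
  have hL0 : 0 ≤ L := by positivity
  set w : ℕ → ℝ := fun k => (n.choose k : ℝ) * p ^ k * (1 - p) ^ (n - k) with hw
  set f : ℕ → ℝ := fun k =>
    if 4 ≤ k then (k : ℝ) * Real.sqrt (min (k : ℝ) a * min (k : ℝ) b) else 0 with hf
  have hwpos : ∀ k, 0 ≤ w k := by
    intro k; rw [hw]; positivity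
  have hfpos : ∀ k, 0 ≤ f k := by
    intro k; rw [hf]; dsimp only; split
    · positivity
    · exact le_refl 0
  have sqrt4 : Real.sqrt 4 = 2 := by
    rw [show (4:ℝ) = 2^2 by norm_num, Real.sqrt_sq (by norm_num)]
  rw [ge_iff_le]
  show C * min (L * Real.sqrt (min L a * min L b)) (L^4) ≤ ∑ k ∈ Finset.range (n+1), w k * f k
  by_cases hcase : L ≤ 8
  · -- small λ : use the single term k = 4
    have hmin : min (L * Real.sqrt (min L a * min L b)) (L^4) ≤ L^4 := min_le_right _ _
    have h4mem : (4:ℕ) ∈ Finset.range (n+1) := by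
      simp only [Finset.mem_range]; omega
    have hsingle : w 4 * f 4 ≤ ∑ k ∈ Finset.range (n+1), w k * f k :=
      Finset.single_le_sum (fun k _ => mul_nonneg (hwpos k) (hfpos k)) h4mem
    have hf4 : (8:ℝ) ≤ f 4 := by
      rw [hf]; dsimp only
      rw [if_pos (le_refl 4)]
      have hc : ((4:ℕ):ℝ) = (4:ℝ) := by norm_num
      rw [hc]
      have h1 : (2:ℝ) ≤ min (4:ℝ) a := le_min (by norm_num) ha
      have h2 : (2:ℝ) ≤ min (4:ℝ) b := le_min (by norm_num) hb
      have h3 : (4:ℝ) ≤ min (4:ℝ) a * min (4:ℝ) b := by nlinarith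
      have h5 := Real.sqrt_le_sqrt h3
      rw [sqrt4] at h5
      linarith
    -- p ≤ 8/9
    have hp89 : p ≤ 8/9 := by
      by_contra h; push_neg at h
      have : 8 < L := by rw [hL]; nlinarith
      linarith
    -- (1-p)^(n-4) ≥ exp(-72)
    have hexp : Real.exp (-72) ≤ (1-p)^(n-4) := by
      have h1 : Real.exp (-(9*p)) ≤ 1 - p := exp_bound' p hp0 hp89
      have hcast : ((n-4:ℕ):ℝ) ≤ (n:ℝ) := by exact_mod_cast Nat.sub_le n 4
      have hc0 : (0:ℝ) ≤ ((n-4:ℕ):ℝ) := by positivity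
      have e1 : (-72:ℝ) ≤ ((n-4:ℕ):ℝ) * (-(9*p)) := by
        have h2 : 9 * p * ((n:ℝ) - ((n-4:ℕ):ℝ)) ≥ 0 :=
          mul_nonneg (by linarith) (by linarith)
        have h3 : 9 * ((n:ℝ) * p) ≤ 72 := by linarith [hcase]
        nlinarith
      calc Real.exp (-72) ≤ Real.exp (((n-4:ℕ):ℝ) * (-(9*p))) := Real.exp_le_exp.mpr e1
        _ = Real.exp (-(9*p)) ^ (n-4) := Real.exp_nat_mul _ _
        _ ≤ (1-p)^(n-4) := pow_le_pow_left₀ (Real.exp_pos _).le h1 _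
    -- choose bound
    have hch := choose4 n hn
    have hnn : (0:ℝ) ≤ (n:ℝ) := by linarith
    have hc4 : (n:ℝ)^4 / 100 ≤ (n.choose 4 : ℝ) := by
      have hb1 : (8/9)*(n:ℝ) ≤ (n:ℝ)-1 := by linarith
      have hb2 : (7/9)*(n:ℝ) ≤ (n:ℝ)-2 := by linarith
      have hb3 : (6/9)*(n:ℝ) ≤ (n:ℝ)-3 := by linarith
      have q1 : (n:ℝ) * ((8/9)*(n:ℝ)) ≤ (n:ℝ)*((n:ℝ)-1) :=
        mul_le_mul_of_nonneg_left hb1 hnn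
      have q2 : ((n:ℝ) * ((8/9)*(n:ℝ))) * ((7/9)*(n:ℝ)) ≤ ((n:ℝ)*((n:ℝ)-1))*((n:ℝ)-2) :=
        mul_le_mul q1 hb2 (by positivity) (by nlinarith)
      have q3 : (((n:ℝ) * ((8/9)*(n:ℝ))) * ((7/9)*(n:ℝ))) * ((6/9)*(n:ℝ))
          ≤ (((n:ℝ)*((n:ℝ)-1))*((n:ℝ)-2))*((n:ℝ)-3) :=
        mul_le_mul q2 hb3 (by positivity) (by nlinarith)
      nlinarith [q3, hch]
    have hw4 : w 4 = (n.choose 4:ℝ) * p^4 * (1-p)^(n-4) := by rw [hw]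
    have hp4 : (0:ℝ) ≤ p^4 := by positivity
    have s1 : (n:ℝ)^4/100 * p^4 ≤ (n.choose 4:ℝ) * p^4 :=
      mul_le_mul_of_nonneg_right hc4 hp4
    have s2 : ((n:ℝ)^4/100 * p^4) * Real.exp (-72) ≤ ((n.choose 4:ℝ) * p^4) * (1-p)^(n-4) :=
      mul_le_mul s1 hexp (Real.exp_pos _).le (by positivity)
    have hL4 : L^4 = (n:ℝ)^4 * p^4 := by rw [hL]; ring
    have key : C * L^4 ≤ w 4 * f 4 := by
      have t1 : w 4 * 8 ≤ w 4 * f 4 := mul_le_mul_of_nonneg_left hf4 (hwpos 4)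
      have t2 : C * L^4 ≤ w 4 * 8 := by
        rw [hw4, hC, hL4]
        have hT0 : (0:ℝ) ≤ (n.choose 4:ℝ) * p^4 * (1-p)^(n-4) := by positivity
        linarith [s2]
      linarith
    calc C * min (L * Real.sqrt (min L a * min L b)) (L^4)
        ≤ C * L^4 := mul_le_mul_of_nonneg_left hmin hCpos.le
      _ ≤ w 4 * f 4 := key
      _ ≤ _ := hsingle
  · -- large λ : Chebyshev
    push_neg at hcase
    have hLpos : (0:ℝ) < L := by linarith
    have hsum1 : ∑ k ∈ Finset.range (n+1), w k = 1 := w_sum n p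
    have hvar : ∑ k ∈ Finset.range (n+1), (L - k)^2 * w k = L * (1-p) := by
      rw [hL, hw]; exact w_var n p
    have hma0 : (0:ℝ) ≤ min L a := le_min hLpos.le (by linarith)
    have hmb0 : (0:ℝ) ≤ min L b := le_min hLpos.le (by linarith)
    have hprod0 : (0:ℝ) ≤ min L a * min L b := mul_nonneg hma0 hmb0
    set R : ℝ := Real.sqrt (min L a * min L b) with hR
    have hR0 : 0 ≤ R := Real.sqrt_nonneg _
    -- Chebyshev bound on the complement
    have cheb : ∑ k ∈ (Finset.range (n+1)).filter (fun (k:ℕ) => ¬ (L/2 ≤ (k:ℝ))), w k ≤ 4 / L := by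
      have step1 : ∀ k ∈ (Finset.range (n+1)).filter (fun (k:ℕ) => ¬ (L/2 ≤ (k:ℝ))),
          w k ≤ (4/L^2) * ((L - k)^2 * w k) := by
        intro k hk
        simp only [Finset.mem_filter, not_le] at hk
        have hk2 : (k:ℝ) < L/2 := hk.2
        have hsq : (L/2)^2 ≤ (L - k)^2 := by nlinarith [Nat.cast_nonneg (α := ℝ) k]
        have h1 : (L/2)^2 * w k ≤ (L - k)^2 * w k := mul_le_mul_of_nonneg_right hsq (hwpos k)
        have hL2 : (0:ℝ) < L^2 := by positivity
        rw [← sub_nonneg] at h1 ⊢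
        have : (4/L^2) * ((L - k)^2 * w k) - w k
            = (4/L^2) * (((L - k)^2 * w k) - (L/2)^2 * w k) := by
          field_simp; ring
        rw [this]
        exact mul_nonneg (by positivity) (by linarith)
      calc ∑ k ∈ (Finset.range (n+1)).filter (fun (k:ℕ) => ¬ (L/2 ≤ (k:ℝ))), w k
          ≤ ∑ k ∈ (Finset.range (n+1)).filter (fun (k:ℕ) => ¬ (L/2 ≤ (k:ℝ))),
              (4/L^2) * ((L - k)^2 * w k) := Finset.sum_le_sum step1
        _ = (4/L^2) * ∑ k ∈ (Finset.range (n+1)).filter (fun (k:ℕ) => ¬ (L/2 ≤ (k:ℝ))),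
              (L - k)^2 * w k := (Finset.mul_sum _ _ _).symm
        _ ≤ (4/L^2) * ∑ k ∈ Finset.range (n+1), (L - k)^2 * w k := by
            apply mul_le_mul_of_nonneg_left _ (by positivity)
            exact Finset.sum_le_sum_of_subset_of_nonneg (Finset.filter_subset _ _)
              (fun k _ _ => mul_nonneg (sq_nonneg _) (hwpos k))
        _ = (4/L^2) * (L * (1-p)) := by rw [hvar]
        _ ≤ 4 / L := by
            have heq : (4/L^2) * (L*(1-p)) = 4*(1-p)/L := by
              field_simp
            rw [heq]
            gcongr
            linarith
    -- mass on S is at least 1/2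
    have hsplit := Finset.sum_filter_add_sum_filter_not (Finset.range (n+1))
      (fun (k:ℕ) => L/2 ≤ (k:ℝ)) w
    have h4L : 4/L ≤ 1/2 := by
      rw [div_le_div_iff₀ hLpos (by norm_num)]; linarith
    have hSsum : 1/2 ≤ ∑ k ∈ (Finset.range (n+1)).filter (fun (k:ℕ) => L/2 ≤ (k:ℝ)), w k := by
      linarith [hsplit, cheb, hsum1, h4L]
    -- termwise bound on S
    have hterm : ∀ k ∈ (Finset.range (n+1)).filter (fun (k:ℕ) => L/2 ≤ (k:ℝ)),
        (L/4 * R) * w k ≤ w k * f k := by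
      intro k hk
      simp only [Finset.mem_filter] at hk
      have hk2 : L/2 ≤ (k:ℝ) := hk.2
      have hk4 : 4 ≤ k := by
        have h4r : (4:ℝ) ≤ (k:ℝ) := by linarith
        exact_mod_cast h4r
      have hfk : L/4 * R ≤ f k := by
        rw [hf]; dsimp only
        rw [if_pos hk4]
        have hma : min L a / 2 ≤ min (k:ℝ) a :=
          le_min (by linarith [min_le_left L a]) (by linarith [min_le_right L a])
        have hmb : min L b / 2 ≤ min (k:ℝ) b :=
          le_min (by linarith [min_le_left L b]) (by linarith [min_le_right L b])
        have hprodk : (min L a * min L b) / 4 ≤ min (k:ℝ) a * min (k:ℝ) b := by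
          nlinarith
        have hs := Real.sqrt_le_sqrt hprodk
        have hdiv : Real.sqrt ((min L a * min L b)/4) = R / 2 := by
          rw [hR, Real.sqrt_div hprod0, sqrt4]
        rw [hdiv] at hs
        have hk0 : (0:ℝ) ≤ (k:ℝ) := Nat.cast_nonneg k
        have := mul_le_mul hk2 hs (by linarith) hk0
        calc L/4 * R = L/2 * (R/2) := by ring
          _ ≤ (k:ℝ) * Real.sqrt (min (k:ℝ) a * min (k:ℝ) b) := this
      calc (L/4 * R) * w k ≤ f k * w k :=
            mul_le_mul_of_nonneg_right hfk (hwpos k)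
        _ = w k * f k := mul_comm _ _
    -- put it together
    have hLR0 : 0 ≤ L/4 * R := by positivity
    have hmain : L/8 * R ≤ ∑ k ∈ Finset.range (n+1), w k * f k := by
      calc L/8 * R = (L/4 * R) * (1/2) := by ring
        _ ≤ (L/4 * R) * ∑ k ∈ (Finset.range (n+1)).filter (fun (k:ℕ) => L/2 ≤ (k:ℝ)), w k :=
            mul_le_mul_of_nonneg_left hSsum hLR0
        _ = ∑ k ∈ (Finset.range (n+1)).filter (fun (k:ℕ) => L/2 ≤ (k:ℝ)), (L/4 * R) * w k :=
            Finset.mul_sum _ _ _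
        _ ≤ ∑ k ∈ (Finset.range (n+1)).filter (fun (k:ℕ) => L/2 ≤ (k:ℝ)), w k * f k :=
            Finset.sum_le_sum hterm
        _ ≤ ∑ k ∈ Finset.range (n+1), w k * f k :=
            Finset.sum_le_sum_of_subset_of_nonneg (Finset.filter_subset _ _)
              (fun k _ _ => mul_nonneg (hwpos k) (hfpos k))
    have hC8 : C ≤ 1/8 := by
      rw [hC]
      have : Real.exp (-72) ≤ 1 := by
        rw [show (1:ℝ) = Real.exp 0 by rw [Real.exp_zero]]
        exact Real.exp_le_exp.mpr (by norm_num)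
      linarith
    calc C * min (L * R) (L^4) ≤ C * (L * R) :=
          mul_le_mul_of_nonneg_left (min_le_left _ _) hCpos.le
      _ ≤ 1/8 * (L * R) := mul_le_mul_of_nonneg_right hC8 (by positivity)
      _ = L/8 * R := by ring
      _ ≤ _ := hmain
end

section
/- For all n ≥ 4 and p ∈ (0, 1/n], the function r_n(p) = E[X·1(X ≥ 4)]/(n^4 p^4), where X ~ Binomial(n,p), is non-increasing in p on (0, 1/n]. -/
open Finset Real

/-- Auxiliary function: `G n x = ∑_{k=4}^n k C(n,k) x^(k-4) (1-x)^(n-k)`. -/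
noncomputable def Gfun (n : ℕ) (x : ℝ) : ℝ :=
  ∑ k ∈ Finset.range (n + 1),
    (if 4 ≤ k then ((k * n.choose k : ℕ) : ℝ) * (x ^ (k - 4) * (1 - x) ^ (n - k)) else 0)

/-- Candidate derivative of `Gfun n`. -/
noncomputable def Gfun' (n : ℕ) (x : ℝ) : ℝ :=
  ∑ k ∈ Finset.range (n + 1),
    (if 4 ≤ k then ((k * n.choose k : ℕ) : ℝ) *
      (((k - 4 : ℕ) : ℝ) * x ^ (k - 5) * (1 - x) ^ (n - k)
        - ((n - k : ℕ) : ℝ) * x ^ (k - 4) * (1 - x) ^ (n - k - 1)) else 0)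

lemma Gfun_hasDerivAt (n : ℕ) (x : ℝ) : HasDerivAt (Gfun n) (Gfun' n x) x := by
  unfold Gfun Gfun'
  apply HasDerivAt.fun_sum
  intro k _
  by_cases h : 4 ≤ k
  · simp only [if_pos h]
    have h1 := hasDerivAt_pow (k - 4) x
    have hlin : HasDerivAt (fun y : ℝ => 1 - y) (-1) x := by
      simpa using (hasDerivAt_id x).const_sub 1
    have h2 : HasDerivAt (fun y : ℝ => (1 - y) ^ (n - k))
        (((n - k : ℕ) : ℝ) * (1 - x) ^ (n - k - 1) * (-1)) x := by
      exact (hasDerivAt_pow (n - k) (1 - x)).comp x hlin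
    have H := (h1.mul h2).const_mul ((k * n.choose k : ℕ) : ℝ)
    refine H.congr_deriv ?_
    rw [show k - 4 - 1 = k - 5 from by omega]
    ring
  · simp only [if_neg h]
    exact hasDerivAt_const x 0

lemma Gfun'_nonpos (n : ℕ) (x : ℝ) (hx0 : 0 ≤ x) (hx1 : x ≤ 1) : Gfun' n x ≤ 0 := by
  unfold Gfun'
  have hsplit : ∀ k : ℕ,
      (if 4 ≤ k then ((k * n.choose k : ℕ) : ℝ) *
        (((k - 4 : ℕ) : ℝ) * x ^ (k - 5) * (1 - x) ^ (n - k)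
          - ((n - k : ℕ) : ℝ) * x ^ (k - 4) * (1 - x) ^ (n - k - 1)) else 0)
      = (if 4 ≤ k then ((k * n.choose k : ℕ) : ℝ) *
          (((k - 4 : ℕ) : ℝ) * x ^ (k - 5) * (1 - x) ^ (n - k)) else 0)
        - (if 4 ≤ k then ((k * n.choose k : ℕ) : ℝ) *
          (((n - k : ℕ) : ℝ) * x ^ (k - 4) * (1 - x) ^ (n - k - 1)) else 0) := by
    intro k; split_ifs <;> ring
  simp only [hsplit]
  rw [Finset.sum_sub_distrib, sub_nonpos]
  set A : ℕ → ℝ := fun k => (if 4 ≤ k then ((k * n.choose k : ℕ) : ℝ) *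
      (((k - 4 : ℕ) : ℝ) * x ^ (k - 5) * (1 - x) ^ (n - k)) else 0) with hA
  set B : ℕ → ℝ := fun k => (if 4 ≤ k then ((k * n.choose k : ℕ) : ℝ) *
      (((n - k : ℕ) : ℝ) * x ^ (k - 4) * (1 - x) ^ (n - k - 1)) else 0) with hB
  have hA0 : A 0 = 0 := by simp [hA]
  have hBn : B n = 0 := by simp [hB, Nat.sub_self]
  rw [Finset.sum_range_succ' A n, Finset.sum_range_succ B n, hA0, hBn, add_zero, add_zero]
  apply Finset.sum_le_sum
  intro k _
  by_cases h4 : 4 ≤ k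
  · have h4' : 4 ≤ k + 1 := by omega
    simp only [hA, hB, if_pos h4, if_pos h4']
    rw [show k + 1 - 4 = k - 3 from by omega, show k + 1 - 5 = k - 4 from by omega,
      show n - (k + 1) = n - k - 1 from by omega]
    have key : (k + 1) * n.choose (k + 1) * (k - 3) ≤ k * n.choose k * (n - k) := by
      have h3 : k - 3 ≤ k := Nat.sub_le k 3
      calc (k + 1) * n.choose (k + 1) * (k - 3)
          = n.choose k * (n - k) * (k - 3) := by
            rw [← Nat.choose_succ_right_eq n k]; ring
        _ ≤ n.choose k * (n - k) * k := Nat.mul_le_mul_left _ h3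
        _ = k * n.choose k * (n - k) := by ring
    have keyR : (((k + 1) * n.choose (k + 1) * (k - 3) : ℕ) : ℝ)
        ≤ ((k * n.choose k * (n - k) : ℕ) : ℝ) := by exact_mod_cast key
    have hX : (0 : ℝ) ≤ x ^ (k - 4) * (1 - x) ^ (n - k - 1) := by
      have : (0:ℝ) ≤ 1 - x := by linarith
      positivity
    refine le_trans (le_of_eq ?_)
      (le_trans (mul_le_mul_of_nonneg_right keyR hX) (le_of_eq ?_))
    · push_cast; ring
    · push_cast; ring
  · have hBk : B k = 0 := by simp [hB, h4]
    rw [hBk]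
    by_cases h4' : 4 ≤ k + 1
    · have hk3 : k = 3 := by omega
      subst hk3
      simp [hA]
    · simp [hA, h4']

lemma Gfun_anti (n : ℕ) : AntitoneOn (Gfun n) (Set.Icc (0:ℝ) 1) := by
  apply antitoneOn_of_deriv_nonpos (convex_Icc 0 1)
  · intro x _
    exact (Gfun_hasDerivAt n x).differentiableAt.continuousAt.continuousWithinAt
  · intro x _
    exact (Gfun_hasDerivAt n x).differentiableAt.differentiableWithinAt
  · intro x hx
    rw [interior_Icc] at hx
    rw [(Gfun_hasDerivAt n x).deriv]
    exact Gfun'_nonpos n x hx.1.le hx.2.le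

lemma sum_eq_pow_mul_Gfun (n : ℕ) (x : ℝ) :
    (∑ k ∈ Finset.range (n + 1),
        (n.choose k : ℝ) * x ^ k * (1 - x) ^ (n - k) * (if 4 ≤ k then (k : ℝ) else 0))
      = x ^ 4 * Gfun n x := by
  unfold Gfun
  rw [Finset.mul_sum]
  refine Finset.sum_congr rfl fun k _ => ?_
  split_ifs with h
  · have hx : x ^ k = x ^ 4 * x ^ (k - 4) := by
      rw [← pow_add]; congr 1; omega
    rw [hx]; push_cast; ring
  · ring

/-- For `n ≥ 4`, the map `p ↦ E[X·1(X ≥ 4)]/(n^4 p^4)` (with `X ~ Binomial(n,p)`)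
is non-increasing on `(0, 1/n]`. -/
theorem stmt_4 (n : ℕ) (hn : 4 ≤ n) (p q : ℝ) (hp : 0 < p) (hpq : p ≤ q)
    (hq : q ≤ 1 / (n : ℝ)) :
    (∑ k ∈ Finset.range (n + 1),
        (n.choose k : ℝ) * q ^ k * (1 - q) ^ (n - k) * (if 4 ≤ k then (k : ℝ) else 0))
      / ((n : ℝ) ^ 4 * q ^ 4)
    ≤ (∑ k ∈ Finset.range (n + 1),
        (n.choose k : ℝ) * p ^ k * (1 - p) ^ (n - k) * (if 4 ≤ k then (k : ℝ) else 0))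
      / ((n : ℝ) ^ 4 * p ^ 4) := by
  have hq0 : 0 < q := lt_of_lt_of_le hp hpq
  have hn0 : (0:ℝ) < n := by
    have : (4:ℝ) ≤ n := by exact_mod_cast hn
    linarith
  have hq1 : q ≤ 1 := by
    have h1 : 1 / (n:ℝ) ≤ 1 := by
      rw [div_le_one hn0]
      have : (4:ℝ) ≤ n := by exact_mod_cast hn
      linarith
    linarith
  have hmemp : p ∈ Set.Icc (0:ℝ) 1 := ⟨hp.le, le_trans hpq hq1⟩
  have hmemq : q ∈ Set.Icc (0:ℝ) 1 := ⟨hq0.le, hq1⟩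
  have hG : Gfun n q ≤ Gfun n p := Gfun_anti n hmemp hmemq hpq
  rw [sum_eq_pow_mul_Gfun, sum_eq_pow_mul_Gfun,
    div_le_div_iff₀ (by positivity) (by positivity)]
  have hmul := mul_le_mul_of_nonneg_left hG
    (show (0:ℝ) ≤ (n:ℝ) ^ 4 * p ^ 4 * q ^ 4 by positivity)
  nlinarith [hmul]
end

section
/- For every integer n ≥ 4, r_n(1/n) := (1 - 1/n)^n · (n(5n-6))/(2(n-1)^2) ≥ e^{-1}·(5/2 - 1/(2(n-1))) ≥ (7/3)·e^{-1}. -/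
open Real

lemma aux_pow_ge (k : ℕ) (hk : 1 ≤ k) :
    (1 - 1 / ((k : ℝ) + 1)) ^ k ≥ (Real.exp 1)⁻¹ := by
  have hk0 : (0:ℝ) < (k : ℝ) := by exact_mod_cast hk
  have hk1 : (0:ℝ) < (k : ℝ) + 1 := by linarith
  have h1 : (1:ℝ) + 1 / (k : ℝ) ≤ Real.exp (1 / (k : ℝ)) := by
    have := Real.add_one_le_exp (1 / (k : ℝ)); linarith
  have hpos : (0:ℝ) < 1 + 1 / (k : ℝ) := by positivity
  have h2 : ((1:ℝ) + 1 / (k : ℝ)) ^ k ≤ Real.exp 1 := by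
    calc ((1:ℝ) + 1 / (k : ℝ)) ^ k ≤ (Real.exp (1 / (k : ℝ))) ^ k :=
          pow_le_pow_left₀ hpos.le h1 k
      _ = Real.exp ((k : ℝ) * (1 / (k : ℝ))) := by rw [← Real.exp_nat_mul]
      _ = Real.exp 1 := by rw [mul_one_div, div_self hk0.ne']
  have heq : (1:ℝ) - 1 / ((k : ℝ) + 1) = (1 + 1 / (k : ℝ))⁻¹ := by
    field_simp
    ring
  rw [heq, inv_pow]
  exact inv_anti₀ (by positivity) h2

/-- For every integer `n ≥ 4`,
`(1 - 1/n)^n · n(5n-6)/(2(n-1)^2) ≥ e⁻¹·(5/2 - 1/(2(n-1))) ≥ (7/3)·e⁻¹`. -/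
theorem stmt_6 (n : ℕ) (hn : 4 ≤ n) :
    (1 - 1 / (n : ℝ)) ^ n * ((n : ℝ) * (5 * (n : ℝ) - 6)) / (2 * ((n : ℝ) - 1) ^ 2)
      ≥ (Real.exp 1)⁻¹ * (5 / 2 - 1 / (2 * ((n : ℝ) - 1))) ∧
    (Real.exp 1)⁻¹ * (5 / 2 - 1 / (2 * ((n : ℝ) - 1))) ≥ (7 / 3) * (Real.exp 1)⁻¹ := by
  obtain ⟨k, rfl⟩ : ∃ k, n = k + 1 := ⟨n - 1, by omega⟩
  have hk : 3 ≤ k := by omega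
  have hk0 : (3:ℝ) ≤ (k : ℝ) := by exact_mod_cast hk
  have hx1 : (0:ℝ) < (k : ℝ) + 1 := by linarith
  have hkpos : (0:ℝ) < (k : ℝ) := by linarith
  have hexp : (0:ℝ) < (Real.exp 1)⁻¹ := by positivity
  have hcast : ((k + 1 : ℕ) : ℝ) = (k : ℝ) + 1 := by push_cast; ring
  rw [hcast]
  have haux := aux_pow_ge k (by omega)
  constructor
  · have hfac : (0:ℝ) < (5 * ((k : ℝ) + 1) - 6) / (2 * (k : ℝ)) := by
      apply div_pos <;> linarith
    have hmul : (1 - 1 / ((k : ℝ) + 1)) ^ k * ((5 * ((k : ℝ) + 1) - 6) / (2 * (k : ℝ)))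
        ≥ (Real.exp 1)⁻¹ * ((5 * ((k : ℝ) + 1) - 6) / (2 * (k : ℝ))) :=
      mul_le_mul_of_nonneg_right haux hfac.le
    have hL : (1 - 1 / ((k : ℝ) + 1)) ^ (k + 1) * (((k : ℝ) + 1) * (5 * ((k : ℝ) + 1) - 6)) /
        (2 * (((k : ℝ) + 1) - 1) ^ 2)
        = (1 - 1 / ((k : ℝ) + 1)) ^ k * ((5 * ((k : ℝ) + 1) - 6) / (2 * (k : ℝ))) := by
      rw [pow_succ]
      simp only [add_sub_cancel_right]
      field_simp
      ring
    have hR : (Real.exp 1)⁻¹ * (5 / 2 - 1 / (2 * (((k : ℝ) + 1) - 1)))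
        = (Real.exp 1)⁻¹ * ((5 * ((k : ℝ) + 1) - 6) / (2 * (k : ℝ))) := by
      congr 1
      simp only [add_sub_cancel_right]
      field_simp
      ring
    rw [hL, hR]
    exact hmul
  · have h : (5:ℝ) / 2 - 1 / (2 * (((k : ℝ) + 1) - 1)) ≥ 7 / 3 := by
      have : 1 / (2 * (k : ℝ)) ≤ 1 / 6 := by
        apply div_le_div_of_nonneg_left <;> linarith
      simp only [add_sub_cancel_right]
      linarith
    calc (Real.exp 1)⁻¹ * (5 / 2 - 1 / (2 * (((k : ℝ) + 1) - 1)))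
        ≥ (Real.exp 1)⁻¹ * (7 / 3) := mul_le_mul_of_nonneg_left h hexp.le
      _ = (7 / 3) * (Real.exp 1)⁻¹ := mul_comm _ _
end

section
/- Let a ≤ b with a, b ≥ 2 and let y ≥ 4 be an integer. Define h(y,a,b) = ((y+1)√(min{y+1,a}·min{y+1,b}) - y√(min{y,a}·min{y,b}))^2. Then h(y,a,b) ≤ (81/16)·min{y,a}·min{y,b} ≤ (81/16)·y·√(min{y,a}·min{y,b}). -/
open Real

lemma key_9 (y v w : ℝ) (hv2 : 2 ≤ v) (hw0 : 0 ≤ w) (hv : v^2 = y) (hw : w^2 = y+1) :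
    ((y+1)*w - y*v)^2 ≤ 81/16 * y := by
  have hv0 : 0 < v := by linarith
  have hy4 : 4 ≤ y := by nlinarith
  have hB : 0 < v*(y+9/4) := by positivity
  have e1 : (w*(y+1))^2 = (y+1)^3 := by rw [mul_pow, hw]; ring
  have e2 : (v*(y+9/4))^2 = y*(y+9/4)^2 := by rw [mul_pow, hv]
  have hsq : (w*(y+1))^2 ≤ (v*(y+9/4))^2 := by rw [e1, e2]; nlinarith
  have hAB : w*(y+1) ≤ v*(y+9/4) := by nlinarith [mul_nonneg hw0 (by linarith : (0:ℝ) ≤ y+1)]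
  have hlow : v*y ≤ w*(y+1) := by nlinarith
  nlinarith [mul_nonneg hw0 (by linarith : (0:ℝ) ≤ y+1)]

set_option maxHeartbeats 1600000 in
/-- For `2 ≤ a ≤ b` and integer `y ≥ 4`, with
`h(y,a,b) = ((y+1)√(min{y+1,a}·min{y+1,b}) - y√(min{y,a}·min{y,b}))^2`, we have
`h(y,a,b) ≤ (81/16)·min{y,a}·min{y,b} ≤ (81/16)·y·√(min{y,a}·min{y,b})`. -/
theorem stmt_9 (a b : ℝ) (ha : 2 ≤ a) (hab : a ≤ b) (y : ℕ) (hy : 4 ≤ y) :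
    (((y : ℝ) + 1) * Real.sqrt (min ((y : ℝ) + 1) a * min ((y : ℝ) + 1) b)
        - (y : ℝ) * Real.sqrt (min (y : ℝ) a * min (y : ℝ) b)) ^ 2
      ≤ 81 / 16 * (min (y : ℝ) a * min (y : ℝ) b) ∧
    81 / 16 * (min (y : ℝ) a * min (y : ℝ) b)
      ≤ 81 / 16 * ((y : ℝ) * Real.sqrt (min (y : ℝ) a * min (y : ℝ) b)) := by
  have hy4 : (4:ℝ) ≤ (y:ℝ) := by exact_mod_cast hy
  have hb2 : 2 ≤ b := le_trans ha hab
  have hma : 2 ≤ min (y:ℝ) a := le_min (by linarith) ha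
  have hmb : 2 ≤ min (y:ℝ) b := le_min (by linarith) hb2
  have hmay : min (y:ℝ) a ≤ (y:ℝ) := min_le_left _ _
  have hmby : min (y:ℝ) b ≤ (y:ℝ) := min_le_left _ _
  constructor
  · rcases le_or_gt a (y:ℝ) with hay | hay
    · rcases le_or_gt b (y:ℝ) with hby | hby
      · -- both ≤ y
        rw [min_eq_right hay, min_eq_right hby, min_eq_right (show a ≤ (y:ℝ)+1 by linarith),
            min_eq_right (show b ≤ (y:ℝ)+1 by linarith)]
        have hab0 : (0:ℝ) ≤ a*b := by nlinarith
        have ht : Real.sqrt (a*b)^2 = a*b := Real.sq_sqrt hab0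
        nlinarith [Real.sqrt_nonneg (a*b)]
      · -- a ≤ y < b
        rw [min_eq_right hay, min_eq_right (show a ≤ (y:ℝ)+1 by linarith),
            min_eq_left (le_of_lt hby)]
        set N := min ((y:ℝ)+1) b with hN
        have hNy : (y:ℝ) ≤ N := le_min (by linarith) (le_of_lt hby)
        have hNy1 : N ≤ (y:ℝ)+1 := min_le_left _ _
        set u := Real.sqrt a with hu'
        set v := Real.sqrt (y:ℝ) with hv'
        set w := Real.sqrt ((y:ℝ)+1) with hw'
        have hu : u^2 = a := Real.sq_sqrt (by linarith)
        have hv : v^2 = (y:ℝ) := Real.sq_sqrt (by linarith)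
        have hw : w^2 = (y:ℝ)+1 := Real.sq_sqrt (by linarith)
        have hu0 : (0:ℝ) ≤ u := Real.sqrt_nonneg _
        have hv0 : (0:ℝ) ≤ v := Real.sqrt_nonneg _
        have hw0 : (0:ℝ) ≤ w := Real.sqrt_nonneg _
        have hv2 : 2 ≤ v := by nlinarith
        have hsay : Real.sqrt (a * (y:ℝ)) = u * v := Real.sqrt_mul (by linarith) _
        have hlow : u * v ≤ Real.sqrt (a * N) := by
          rw [← hsay]; exact Real.sqrt_le_sqrt (by nlinarith)
        have hhigh : Real.sqrt (a * N) ≤ u * w := by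
          rw [show u*w = Real.sqrt (a*((y:ℝ)+1)) from (Real.sqrt_mul (by linarith) _).symm]
          exact Real.sqrt_le_sqrt (by nlinarith)
        have hX := key_9 (y:ℝ) v w hv2 hw0 hv hw
        rw [hsay]
        set P := Real.sqrt (a * N) with hP
        have hP1 : ((y:ℝ)+1)*(u*v) ≤ ((y:ℝ)+1)*P :=
          mul_le_mul_of_nonneg_left hlow (by linarith)
        have hP2 : ((y:ℝ)+1)*P ≤ ((y:ℝ)+1)*(u*w) :=
          mul_le_mul_of_nonneg_left hhigh (by linarith)
        have huv0 : 0 ≤ u*v := mul_nonneg hu0 hv0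
        have hD0 : 0 ≤ ((y:ℝ)+1)*P - (y:ℝ)*(u*v) := by linarith
        have hDB : ((y:ℝ)+1)*P - (y:ℝ)*(u*v) ≤ ((y:ℝ)+1)*(u*w) - (y:ℝ)*(u*v) := by linarith
        have h1 : u^2 * ((((y:ℝ)+1)*w - (y:ℝ)*v))^2 ≤ u^2 * (81/16*(y:ℝ)) :=
          mul_le_mul_of_nonneg_left hX (sq_nonneg u)
        calc (((y:ℝ)+1)*P - (y:ℝ)*(u*v))^2
            ≤ (((y:ℝ)+1)*(u*w) - (y:ℝ)*(u*v))^2 := by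
              apply pow_le_pow_left₀ hD0 hDB
          _ = u^2 * ((((y:ℝ)+1)*w - (y:ℝ)*v))^2 := by ring
          _ ≤ u^2 * (81/16*(y:ℝ)) := h1
          _ = 81/16 * (a * (y:ℝ)) := by rw [hu]; ring
    · -- y < a ≤ b
      have hby : (y:ℝ) < b := lt_of_lt_of_le hay hab
      rw [min_eq_left (le_of_lt hay), min_eq_left (le_of_lt hby)]
      set M := min ((y:ℝ)+1) a with hM
      set N := min ((y:ℝ)+1) b with hN
      have hMy : (y:ℝ) ≤ M := le_min (by linarith) (le_of_lt hay)
      have hNy : (y:ℝ) ≤ N := le_min (by linarith) (le_of_lt hby)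
      have hMy1 : M ≤ (y:ℝ)+1 := min_le_left _ _
      have hNy1 : N ≤ (y:ℝ)+1 := min_le_left _ _
      have hyy : Real.sqrt ((y:ℝ)*(y:ℝ)) = (y:ℝ) := Real.sqrt_mul_self (by linarith)
      rw [hyy]
      set t := Real.sqrt (M*N) with ht'
      have ht0 : 0 ≤ t := Real.sqrt_nonneg _
      have ht2 : t^2 = M*N := Real.sq_sqrt (by nlinarith)
      have htlow : (y:ℝ) ≤ t := by
        rw [← hyy]
        exact Real.sqrt_le_sqrt (mul_le_mul hMy hNy (by linarith) (by linarith))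
      have hthigh : t ≤ (y:ℝ)+1 := by
        rw [ht']
        calc Real.sqrt (M*N) ≤ Real.sqrt (((y:ℝ)+1)^2) := by
              apply Real.sqrt_le_sqrt
              have := mul_le_mul hMy1 hNy1 (by linarith : (0:ℝ) ≤ N)
                (by linarith : (0:ℝ) ≤ (y:ℝ)+1)
              nlinarith [this]
          _ = (y:ℝ)+1 := Real.sqrt_sq (by linarith)
      have hty : ((y:ℝ)+1)*(y:ℝ) ≤ ((y:ℝ)+1)*t :=
        mul_le_mul_of_nonneg_left htlow (by linarith)
      have hty2 : ((y:ℝ)+1)*t ≤ ((y:ℝ)+1)*((y:ℝ)+1) :=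
        mul_le_mul_of_nonneg_left hthigh (by linarith)
      have hD0 : 0 ≤ ((y:ℝ)+1)*t - (y:ℝ)*(y:ℝ) := by nlinarith [hty]
      have hDB : ((y:ℝ)+1)*t - (y:ℝ)*(y:ℝ) ≤ 2*(y:ℝ)+1 := by nlinarith [hty2]
      have hsq : (((y:ℝ)+1)*t - (y:ℝ)*(y:ℝ))^2 ≤ (2*(y:ℝ)+1)^2 :=
        pow_le_pow_left₀ hD0 hDB 2
      nlinarith [hsq, sq_nonneg ((y:ℝ)-4)]
  · -- second part
    set s := Real.sqrt (min (y:ℝ) a * min (y:ℝ) b) with hs'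
    have hs0 : 0 ≤ s := Real.sqrt_nonneg _
    have hs2 : s^2 = min (y:ℝ) a * min (y:ℝ) b := Real.sq_sqrt (by nlinarith)
    have hsy : s ≤ (y:ℝ) := by
      rw [show (y:ℝ) = Real.sqrt ((y:ℝ)*(y:ℝ)) from (Real.sqrt_mul_self (by linarith)).symm]
      exact Real.sqrt_le_sqrt (by nlinarith)
    nlinarith
end
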